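/- Let Ĝ be a finite group with a surjective homomorphism π: Ĝ → {±1} and kernel G, let λ̂ be a normalized π-twisted 2-cocycle on Ĝ valued in ℂˣ, and let λ be its restriction to G. Call a λ-twisted representation (V, φ) irreducible if V ≠ 0 and the only subspaces of V invariant under all φ(g), g ∈ G, are 0 and V. Let (V₁, φ₁), …, (V_r, φ_r) be a complete set of pairwise non-isomorphic irreducible λ-twisted representations of G (i.e. every irreducible λ-twisted representation of G is isomorphic to exactly one of them), and define ν(V_i) := (1/|G|) · Σ_{ς ∈ Ĝ∖G} λ̂(ς,ς) · tr(φ_i(ς²)). Then Σ_{ς ∈ Ĝ∖G with ς² = e} λ̂(ς,ς) = Σ_{i=1}^{r} ν(V_i) · dim V_i, an identity of complex numbers. -/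

import Mathlib

open scoped Classical

/-- A `λ`-twisted (finite-dimensional, complex) representation of a group `G`, for a
cocycle `lam : G → G → ℂˣ`: a pair `(V, φ)` with `φ(g) ∘ φ(h) = λ(g,h) • φ(gh)`. -/
structure TwRep (G : Type*) [Group G] (lam : G → G → ℂˣ) where
  V : Type
  [acg : AddCommGroup V]
  [mod : Module ℂ V]
  [fd : FiniteDimensional ℂ V]
  φ : G → V ≃ₗ[ℂ] V
  hrep : ∀ g h : G, (φ g).toLinearMap ∘ₗ (φ h).toLinearMap
    = ((lam g h : ℂˣ) : ℂ) • (φ (g * h)).toLinearMap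

attribute [instance] TwRep.acg TwRep.mod TwRep.fd

/-- Irreducibility of a twisted representation: `V ≠ 0` and the only invariant subspaces
are `0` and `V`. -/
def TwRep.Irred {G : Type*} [Group G] {lam : G → G → ℂˣ} (ρ : TwRep G lam) : Prop :=
  (∃ v : ρ.V, v ≠ 0) ∧
    ∀ W : Submodule ℂ ρ.V, (∀ (g : G), ∀ w ∈ W, ρ.φ g w ∈ W) → W = ⊥ ∨ W = ⊤

/-- Isomorphism of twisted representations: an intertwining linear equivalence. -/
def TwRep.Iso {G : Type*} [Group G] {lam : G → G → ℂˣ} (ρ σ : TwRep G lam) : Prop :=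
  ∃ e : ρ.V ≃ₗ[ℂ] σ.V, ∀ (g : G) (v : ρ.V), e (ρ.φ g v) = σ.φ g (e v)

/-- The square `ς²` of any element of `Ĝ` lies in the kernel of `π : Ĝ → {±1}`. -/
def sqk {Ghat : Type*} [Group Ghat] (π : Ghat →* ℤˣ) (ς : Ghat) : π.ker :=
  ⟨ς * ς, by rw [MonoidHom.mem_ker, map_mul]; exact Int.units_mul_self (π ς)⟩

namespace TwAux

open LinearMap Module

variable {G : Type*} [Group G] {lam : G → G → ℂˣ}

theorem phi_comp (ρ : TwRep G lam) (g h : G) (v : ρ.V) :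
    ρ.φ g (ρ.φ h v) = ((lam g h : ℂˣ) : ℂ) • ρ.φ (g * h) v := by
  simpa using LinearMap.ext_iff.mp (ρ.hrep g h) v

theorem lam_one_left (hll : lam 1 1 = 1)
    (hc : ∀ a b c : G, lam b c * lam a (b * c) = lam (a * b) c * lam a b)
    (g : G) : lam 1 g = 1 := by
  have h := hc 1 1 g
  simp only [one_mul, hll, mul_one] at h
  exact mul_left_cancel (h.trans (mul_one _).symm)

theorem lam_one_right (hll : lam 1 1 = 1)
    (hc : ∀ a b c : G, lam b c * lam a (b * c) = lam (a * b) c * lam a b)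
    (g : G) : lam g 1 = 1 := by
  have h := hc g 1 1
  simp only [one_mul, mul_one, hll] at h
  have h' : lam g 1 * 1 = lam g 1 * lam g 1 := by rw [mul_one]; exact h
  exact (mul_left_cancel h').symm

theorem lam_inv_comm (hll : lam 1 1 = 1)
    (hc : ∀ a b c : G, lam b c * lam a (b * c) = lam (a * b) c * lam a b)
    (g : G) : lam g⁻¹ g = lam g g⁻¹ := by
  have h := hc g g⁻¹ g
  simp only [inv_mul_cancel, mul_inv_cancel, lam_one_left hll hc,
    lam_one_right hll hc, one_mul, mul_one] at h
  exact h

theorem phi_one (hll : lam 1 1 = 1) (ρ : TwRep G lam) (v : ρ.V) : ρ.φ 1 v = v := by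
  have h := phi_comp ρ 1 1 v
  rw [hll] at h
  simp only [one_mul, Units.val_one, one_smul] at h
  exact (ρ.φ 1).injective h

theorem phi_inv_smul (hll : lam 1 1 = 1) (ρ : TwRep G lam) (g : G) (v : ρ.V) :
    ρ.φ g (((lam g g⁻¹ : ℂˣ) : ℂ)⁻¹ • ρ.φ g⁻¹ v) = v := by
  rw [map_smul, phi_comp, mul_inv_cancel, smul_smul,
    inv_mul_cancel₀ (Units.ne_zero _), one_smul, phi_one hll]

theorem phi_symm (hll : lam 1 1 = 1) (ρ : TwRep G lam) (g : G) (v : ρ.V) :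
    (ρ.φ g).symm v = ((lam g g⁻¹ : ℂˣ) : ℂ)⁻¹ • ρ.φ g⁻¹ v :=
  (ρ.φ g).symm_apply_eq.mpr (phi_inv_smul hll ρ g v).symm

/-- Invariance of a subspace. -/
def Inv (ρ : TwRep G lam) (W : Submodule ℂ ρ.V) : Prop :=
  ∀ g : G, ∀ w ∈ W, ρ.φ g w ∈ W

theorem inv_symm_mem (hll : lam 1 1 = 1) {ρ : TwRep G lam} {W : Submodule ℂ ρ.V}
    (hW : Inv ρ W) (g : G) {w : ρ.V} (hw : w ∈ W) : (ρ.φ g).symm w ∈ W := by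
  rw [phi_symm hll]
  exact W.smul_mem _ (hW g⁻¹ w hw)

/-- The subrepresentation on an invariant subspace. -/
noncomputable def subrep (hll : lam 1 1 = 1) (ρ : TwRep G lam) (W : Submodule ℂ ρ.V)
    (hW : Inv ρ W) : TwRep G lam where
  V := W
  φ g :=
    { toFun := fun w => ⟨ρ.φ g w, hW g w w.2⟩
      map_add' := fun a b => by ext; simp
      map_smul' := fun c a => by ext; simp
      invFun := fun w => ⟨(ρ.φ g).symm w, inv_symm_mem hll hW g w.2⟩
      left_inv := fun w => Subtype.ext ((ρ.φ g).symm_apply_apply w)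
      right_inv := fun w => Subtype.ext ((ρ.φ g).apply_symm_apply w) }
  hrep g h := by
    apply LinearMap.ext
    intro w
    apply Subtype.ext
    simpa using phi_comp ρ g h w

@[simp] theorem subrep_coe (hll : lam 1 1 = 1) (ρ : TwRep G lam) (W : Submodule ℂ ρ.V)
    (hW : Inv ρ W) (g : G) (w : W) :
    ((subrep hll ρ W hW).φ g w).1 = ρ.φ g (w : ρ.V) := rfl

/-- The space of intertwiners. -/
def HomT (ρ σ : TwRep G lam) : Submodule ℂ (ρ.V →ₗ[ℂ] σ.V) where
  carrier := { f | ∀ (g : G) (v : ρ.V), f (ρ.φ g v) = σ.φ g (f v) }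
  add_mem' := by
    intro a b ha hb g v
    simp [ha g v, hb g v]
  zero_mem' := by intro g v; simp
  smul_mem' := by
    intro c a ha g v
    simp [ha g v]

theorem mem_homT {ρ σ : TwRep G lam} {f : ρ.V →ₗ[ℂ] σ.V} :
    f ∈ HomT ρ σ ↔ ∀ (g : G) (v : ρ.V), f (ρ.φ g v) = σ.φ g (f v) := Iff.rfl

theorem schur_iso {ρ σ : TwRep G lam} (hρ : ρ.Irred) (hσ : σ.Irred)
    {f : ρ.V →ₗ[ℂ] σ.V} (hf : f ∈ HomT ρ σ) (h0 : f ≠ 0) : ρ.Iso σ := by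
  have hker : LinearMap.ker f = ⊥ := by
    have hinv : ∀ g : G, ∀ w ∈ LinearMap.ker f, ρ.φ g w ∈ LinearMap.ker f := by
      intro g w hw
      rw [LinearMap.mem_ker] at hw ⊢
      rw [hf g w, hw, map_zero]
    rcases hρ.2 (LinearMap.ker f) hinv with h | h
    · exact h
    · exact absurd (LinearMap.ker_eq_top.mp h) h0
  have hran : LinearMap.range f = ⊤ := by
    have hinv : ∀ g : G, ∀ w ∈ LinearMap.range f, σ.φ g w ∈ LinearMap.range f := by
      rintro g w ⟨v, rfl⟩
      exact ⟨ρ.φ g v, hf g v⟩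
    rcases hσ.2 (LinearMap.range f) hinv with h | h
    · exact absurd (LinearMap.range_eq_bot.mp h) h0
    · exact h
  refine ⟨LinearEquiv.ofBijective f ⟨LinearMap.ker_eq_bot.mp hker,
    LinearMap.range_eq_top.mp hran⟩, ?_⟩
  intro g v
  exact hf g v

theorem schur_scalar {ρ : TwRep G lam} (hρ : ρ.Irred)
    {f : ρ.V →ₗ[ℂ] ρ.V} (hf : f ∈ HomT ρ ρ) : ∃ c : ℂ, f = c • LinearMap.id := by
  obtain ⟨v₀, hv₀⟩ := hρ.1
  haveI : Nontrivial ρ.V := ⟨v₀, 0, hv₀⟩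
  obtain ⟨c, hc⟩ := Module.End.exists_eigenvalue (f : Module.End ℂ ρ.V)
  obtain ⟨v, hv, hvne⟩ := hc.exists_hasEigenvector
  have hfv : f v = c • v := Module.End.mem_eigenspace_iff.mp hv
  refine ⟨c, ?_⟩
  have hmem : (f - c • LinearMap.id) ∈ HomT ρ ρ :=
    sub_mem hf (Submodule.smul_mem _ c (fun g v => rfl))
  have hinv : ∀ g : G, ∀ w ∈ LinearMap.ker (f - c • LinearMap.id),
      ρ.φ g w ∈ LinearMap.ker (f - c • LinearMap.id) := by
    intro g w hw
    rw [LinearMap.mem_ker] at hw ⊢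
    rw [hmem g w, hw, map_zero]
  have hker : LinearMap.ker (f - c • LinearMap.id) = ⊤ := by
    rcases hρ.2 (LinearMap.ker (f - c • LinearMap.id)) hinv with h | h
    · exfalso
      have hvk : v ∈ LinearMap.ker (f - c • LinearMap.id) := by
        rw [LinearMap.mem_ker]
        simp only [LinearMap.sub_apply, LinearMap.smul_apply, LinearMap.id_apply]
        rw [hfv, sub_self]
      rw [h] at hvk
      exact hvne (by simpa using hvk)
    · exact h
  have h2 : f - c • LinearMap.id = 0 := LinearMap.ker_eq_top.mp hker
  exact sub_eq_zero.mp h2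

theorem finrank_homT_self {ρ : TwRep G lam} (hρ : ρ.Irred) :
    finrank ℂ (HomT ρ ρ) = 1 := by
  obtain ⟨v₀, hv₀⟩ := hρ.1
  have hid : (LinearMap.id : ρ.V →ₗ[ℂ] ρ.V) ∈ HomT ρ ρ := fun g v => rfl
  let L : ℂ →ₗ[ℂ] HomT ρ ρ := LinearMap.toSpanSingleton ℂ (HomT ρ ρ) ⟨LinearMap.id, hid⟩
  have hbij : Function.Bijective L := by
    constructor
    · intro a b hab
      have h2 : a • v₀ = b • v₀ := by
        have := congrArg (fun f : HomT ρ ρ => (f : ρ.V →ₗ[ℂ] ρ.V) v₀) hab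
        simpa [L, LinearMap.toSpanSingleton] using this
      exact smul_left_injective ℂ hv₀ h2
    · intro f
      obtain ⟨c, hcf⟩ := schur_scalar hρ f.2
      exact ⟨c, Subtype.ext (by simp [L, LinearMap.toSpanSingleton, hcf])⟩
  have := (LinearEquiv.ofBijective L hbij).finrank_eq
  simpa using this.symm

theorem finrank_homT_ne {ρ σ : TwRep G lam} (hρ : ρ.Irred) (hσ : σ.Irred)
    (hniso : ¬ ρ.Iso σ) : finrank ℂ (HomT ρ σ) = 0 := by
  have hbot : HomT ρ σ = ⊥ := by
    rw [Submodule.eq_bot_iff]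
    intro f hf
    by_contra h0
    exact hniso (schur_iso hρ hσ hf h0)
  rw [hbot, finrank_bot]

theorem trace_congr {ρ ρ' : TwRep G lam} (e : ρ.V ≃ₗ[ℂ] ρ'.V)
    (he : ∀ (g : G) (v : ρ.V), e (ρ.φ g v) = ρ'.φ g (e v)) (g : G) :
    trace ℂ ρ.V (ρ.φ g).toLinearMap = trace ℂ ρ'.V (ρ'.φ g).toLinearMap := by
  rw [← LinearMap.trace_conj' (ρ.φ g).toLinearMap e]
  congr 1
  apply LinearMap.ext
  intro v
  simp only [LinearEquiv.conj_apply, LinearMap.comp_apply, LinearEquiv.coe_coe,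
    LinearEquiv.coe_toLinearMap]
  rw [he g (e.symm v), e.apply_symm_apply]

theorem finrank_homT_congr {ρ ρ' σ : TwRep G lam} (e : ρ.V ≃ₗ[ℂ] ρ'.V)
    (he : ∀ (g : G) (v : ρ.V), e (ρ.φ g v) = ρ'.φ g (e v)) :
    finrank ℂ (HomT ρ σ) = finrank ℂ (HomT ρ' σ) := by
  have hesymm : ∀ (g : G) (v : ρ'.V), e.symm (ρ'.φ g v) = ρ.φ g (e.symm v) := by
    intro g v
    apply e.injective
    rw [e.apply_symm_apply, he g (e.symm v), e.apply_symm_apply]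
  have hmem1 : ∀ f : HomT ρ' σ, (f : ρ'.V →ₗ[ℂ] σ.V) ∘ₗ (e : ρ.V →ₗ[ℂ] ρ'.V) ∈ HomT ρ σ := by
    intro f g v
    simp only [LinearMap.comp_apply, LinearEquiv.coe_coe]
    rw [he g v, f.2 g (e v)]
  have hmem2 : ∀ f : HomT ρ σ, (f : ρ.V →ₗ[ℂ] σ.V) ∘ₗ (e.symm : ρ'.V →ₗ[ℂ] ρ.V) ∈ HomT ρ' σ := by
    intro f g v
    simp only [LinearMap.comp_apply, LinearEquiv.coe_coe]
    rw [hesymm g v, f.2 g (e.symm v)]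
  let E : HomT ρ' σ ≃ₗ[ℂ] HomT ρ σ :=
    { toFun := fun f => ⟨_, hmem1 f⟩
      map_add' := fun a b => Subtype.ext (by
        apply LinearMap.ext; intro v; simp)
      map_smul' := fun c a => Subtype.ext (by
        apply LinearMap.ext; intro v; simp)
      invFun := fun f => ⟨_, hmem2 f⟩
      left_inv := fun f => Subtype.ext (by
        apply LinearMap.ext; intro v; simp)
      right_inv := fun f => Subtype.ext (by
        apply LinearMap.ext; intro v; simp) }
  exact E.finrank_eq.symm

theorem maschke [Fintype G] (hll : lam 1 1 = 1)
    (M : TwRep G lam) (W : Submodule ℂ M.V) (hW : Inv M W) :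
    ∃ W' : Submodule ℂ M.V, Inv M W' ∧ IsCompl W W' := by
  obtain ⟨U, hU⟩ := W.exists_isCompl
  set p : M.V →ₗ[ℂ] M.V := W.subtype.comp (W.linearProjOfIsCompl U hU) with hp
  have hpmem : ∀ x, p x ∈ W := fun x => (W.linearProjOfIsCompl U hU x).2
  have hpfix : ∀ w ∈ W, p w = w := by
    intro w hw
    have := Submodule.projectionOnto_apply_left hU ⟨w, hw⟩
    simp only [hp, LinearMap.comp_apply, Submodule.coe_subtype]
    exact congrArg Subtype.val this
  set n : ℂ := (Fintype.card G : ℂ) with hn'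
  have hn : n ≠ 0 := Nat.cast_ne_zero.mpr Fintype.card_ne_zero
  set P : M.V →ₗ[ℂ] M.V :=
    n⁻¹ • ∑ g : G, ((M.φ g).symm.toLinearMap.comp (p.comp (M.φ g).toLinearMap)) with hP
  have hPapply : ∀ x, P x = n⁻¹ • ∑ g : G, (M.φ g).symm (p (M.φ g x)) := by
    intro x
    rw [hP]
    simp [LinearMap.sum_apply]
  have hPmem : ∀ x, P x ∈ W := by
    intro x
    rw [hPapply]
    exact W.smul_mem _ (Submodule.sum_mem _ fun g _ => inv_symm_mem hll hW g (hpmem _))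
  have hPfix : ∀ w ∈ W, P w = w := by
    intro w hw
    rw [hPapply]
    have hterm : ∀ g : G, (M.φ g).symm (p (M.φ g w)) = w := by
      intro g
      rw [hpfix _ (hW g w hw), LinearEquiv.symm_apply_apply]
    rw [Finset.sum_congr rfl fun g _ => hterm g, Finset.sum_const, Finset.card_univ,
      ← Nat.cast_smul_eq_nsmul ℂ, smul_smul, ← hn', inv_mul_cancel₀ hn, one_smul]
  have hPcomm : ∀ (h : G) (x : M.V), P (M.φ h x) = M.φ h (P x) := by
    intro h x
    rw [hPapply, hPapply]
    have hterm : ∀ g : G, (M.φ g).symm (p (M.φ g (M.φ h x)))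
        = M.φ h ((M.φ (g * h)).symm (p (M.φ (g * h) x))) := by
      intro g
      rw [phi_comp M g h x, map_smul, map_smul]
      apply (M.φ g).injective
      rw [map_smul, LinearEquiv.apply_symm_apply,
        phi_comp M g h ((M.φ (g * h)).symm (p (M.φ (g * h) x))),
        LinearEquiv.apply_symm_apply]
    rw [Finset.sum_congr rfl fun g _ => hterm g, ← map_sum (M.φ h), map_smul]
    congr 2
    exact Fintype.sum_equiv (Equiv.mulRight h)
      (fun g => (M.φ (g * h)).symm (p (M.φ (g * h) x)))
      (fun g => (M.φ g).symm (p (M.φ g x))) (fun g => rfl)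
  refine ⟨LinearMap.ker P, ?_, ?_⟩
  · intro g w hw
    rw [LinearMap.mem_ker] at hw ⊢
    rw [hPcomm g w, hw, map_zero]
  · constructor
    · rw [Submodule.disjoint_def]
      intro x hxW hxK
      have h1 := hPfix x hxW
      rw [LinearMap.mem_ker.mp hxK] at h1
      exact h1.symm
    · rw [codisjoint_iff_le_sup]
      intro x _
      have h1 : P x ∈ W := hPmem x
      have h2 : x - P x ∈ LinearMap.ker P := by
        rw [LinearMap.mem_ker, map_sub, hPfix (P x) (hPmem x), sub_self]
      have h3 : x = P x + (x - P x) := by abel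
      rw [h3]
      exact Submodule.add_mem_sup h1 h2

theorem subrep_toLinearMap (hll : lam 1 1 = 1) (M : TwRep G lam) (W : Submodule ℂ M.V)
    (hW : Inv M W) (g : G) :
    ((subrep hll M W hW).φ g).toLinearMap = (M.φ g).toLinearMap.restrict (hW g) := by
  apply LinearMap.ext
  intro w
  apply Subtype.ext
  rfl

theorem subrep_sub (hll : lam 1 1 = 1) (M : TwRep G lam) (W : Submodule ℂ M.V)
    (hW : Inv M W) (g : G) (w : W) :
    W.subtype ((subrep hll M W hW).φ g w) = M.φ g (W.subtype w) := rfl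

theorem trace_isCompl (hll : lam 1 1 = 1) (M : TwRep G lam) (k : G)
    (W W' : Submodule ℂ M.V) (hW : Inv M W) (hW' : Inv M W') (hco : IsCompl W W') :
    trace ℂ M.V (M.φ k).toLinearMap
      = trace ℂ W ((subrep hll M W hW).φ k).toLinearMap
        + trace ℂ W' ((subrep hll M W' hW').φ k).toLinearMap := by
  rw [subrep_toLinearMap, subrep_toLinearMap]
  set E := Submodule.prodEquivOfIsCompl W W' hco
  have hconj : E.conj (((M.φ k).toLinearMap.restrict (hW k)).prodMap
      ((M.φ k).toLinearMap.restrict (hW' k))) = (M.φ k).toLinearMap := by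
    apply LinearMap.ext
    intro x
    conv_rhs => rw [← E.apply_symm_apply x]
    rw [LinearEquiv.conj_apply]
    simp only [LinearMap.comp_apply, LinearEquiv.coe_coe, LinearEquiv.coe_toLinearMap,
      LinearEquiv.symm_apply_apply]
    set y := E.symm x
    show E (((M.φ k).toLinearMap.restrict (hW k)).prodMap
        ((M.φ k).toLinearMap.restrict (hW' k)) y) = M.φ k (E y)
    have hE : ∀ z : W × W', E z = (z.1 : M.V) + (z.2 : M.V) := fun z => rfl
    rw [hE, hE]
    simp only [LinearMap.prodMap_apply, LinearMap.restrict_apply]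
    rw [map_add]
    rfl
  have h2 := congrArg (trace ℂ M.V) hconj
  rw [LinearMap.trace_conj'] at h2
  rw [← h2, LinearMap.trace_prodMap']

theorem finrank_homT_isCompl (hll : lam 1 1 = 1) (M σ : TwRep G lam)
    (W W' : Submodule ℂ M.V) (hW : Inv M W) (hW' : Inv M W') (hco : IsCompl W W') :
    finrank ℂ (HomT M σ)
      = finrank ℂ (HomT (subrep hll M W hW) σ) + finrank ℂ (HomT (subrep hll M W' hW') σ) := by
  set pW := W.projectionOnto W' hco with hpW
  set pW' := W'.projectionOnto W hco.symm with hpW'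
  have hsum : ∀ x : M.V, W.subtype (pW x) + W'.subtype (pW' x) = x := fun x =>
    Submodule.projection_add_projection_eq_self hco x
  have hprojW : ∀ (g : G) (v : M.V), pW (M.φ g v) = (subrep hll M W hW).φ g (pW v) := by
    intro g v
    have h0 : M.φ g v = M.φ g (W.subtype (pW v)) + M.φ g (W'.subtype (pW' v)) := by
      rw [← map_add, hsum]
    rw [h0, map_add]
    have h1 : pW (M.φ g (W.subtype (pW v))) = ⟨M.φ g (W.subtype (pW v)), hW g _ (pW v).2⟩ := by
      exact Submodule.projectionOnto_apply_left hco ⟨M.φ g (W.subtype (pW v)), hW g _ (pW v).2⟩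
    have h2 : pW (M.φ g (W'.subtype (pW' v))) = 0 :=
      Submodule.projectionOnto_apply_of_mem_right hco (hW' g _ (pW' v).2)
    rw [h1, h2, add_zero]
    apply Subtype.ext
    rfl
  have hprojW' : ∀ (g : G) (v : M.V), pW' (M.φ g v) = (subrep hll M W' hW').φ g (pW' v) := by
    intro g v
    have h0 : M.φ g v = M.φ g (W.subtype (pW v)) + M.φ g (W'.subtype (pW' v)) := by
      rw [← map_add, hsum]
    rw [h0, map_add]
    have h1 : pW' (M.φ g (W'.subtype (pW' v))) = ⟨M.φ g (W'.subtype (pW' v)), hW' g _ (pW' v).2⟩ := by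
      exact Submodule.projectionOnto_apply_left hco.symm
        ⟨M.φ g (W'.subtype (pW' v)), hW' g _ (pW' v).2⟩
    have h2 : pW' (M.φ g (W.subtype (pW v))) = 0 :=
      Submodule.projectionOnto_apply_of_mem_right hco.symm (hW g _ (pW v).2)
    rw [h1, h2, zero_add]
    apply Subtype.ext
    rfl
  have hmem1 : ∀ f : HomT M σ,
      (f : M.V →ₗ[ℂ] σ.V).comp W.subtype ∈ HomT (subrep hll M W hW) σ := by
    intro f g v
    exact f.2 g (W.subtype v)
  have hmem1' : ∀ f : HomT M σ,
      (f : M.V →ₗ[ℂ] σ.V).comp W'.subtype ∈ HomT (subrep hll M W' hW') σ := by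
    intro f g v
    exact f.2 g (W'.subtype v)
  have hmem2 : ∀ (f₁ : HomT (subrep hll M W hW) σ) (f₂ : HomT (subrep hll M W' hW') σ),
      f₁.1.comp pW + f₂.1.comp pW' ∈ HomT M σ := by
    intro f₁ f₂ g v
    have e1 : f₁.1 (pW (M.φ g v)) = σ.φ g (f₁.1 (pW v)) :=
      (congrArg f₁.1 (hprojW g v)).trans (f₁.2 g (pW v))
    have e2 : f₂.1 (pW' (M.φ g v)) = σ.φ g (f₂.1 (pW' v)) :=
      (congrArg f₂.1 (hprojW' g v)).trans (f₂.2 g (pW' v))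
    simp only [LinearMap.add_apply, LinearMap.comp_apply]
    rw [map_add (σ.φ g)]
    exact congrArg₂ (· + ·) e1 e2
  let E : HomT M σ ≃ₗ[ℂ] HomT (subrep hll M W hW) σ × HomT (subrep hll M W' hW') σ :=
    { toFun := fun f => (⟨_, hmem1 f⟩, ⟨_, hmem1' f⟩)
      map_add' := fun a b => by
        refine Prod.ext (Subtype.ext ?_) (Subtype.ext ?_) <;>
          (apply LinearMap.ext; intro v; rfl)
      map_smul' := fun c a => by
        refine Prod.ext (Subtype.ext ?_) (Subtype.ext ?_) <;>
          (apply LinearMap.ext; intro v; rfl)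
      invFun := fun f => ⟨_, hmem2 f.1 f.2⟩
      left_inv := fun f => by
        apply Subtype.ext
        apply LinearMap.ext
        intro v
        simp only [LinearMap.add_apply, LinearMap.comp_apply]
        show (f : M.V →ₗ[ℂ] σ.V) (W.subtype (pW v))
            + (f : M.V →ₗ[ℂ] σ.V) (W'.subtype (pW' v)) = (f : M.V →ₗ[ℂ] σ.V) v
        rw [← map_add, hsum]
      right_inv := fun f => by
        refine Prod.ext (Subtype.ext ?_) (Subtype.ext ?_) <;>
          (apply LinearMap.ext; intro v) <;>
          simp only [LinearMap.add_apply, LinearMap.comp_apply]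
        · show f.1.1 (pW (W.subtype v)) + f.2.1 (pW' (W.subtype v)) = f.1.1 v
          have a1 : pW (W.subtype v) = v := Submodule.projectionOnto_apply_left hco v
          have a2 : pW' (W.subtype v) = 0 :=
            Submodule.projectionOnto_apply_of_mem_right hco.symm v.2
          rw [a1, a2]
          exact (congrArg (fun y => f.1.1 v + y) (map_zero f.2.1)).trans (add_zero _)
        · show f.1.1 (pW (W'.subtype v)) + f.2.1 (pW' (W'.subtype v)) = f.2.1 v
          have a1 : pW' (W'.subtype v) = v :=
            Submodule.projectionOnto_apply_left hco.symm v
          have a2 : pW (W'.subtype v) = 0 :=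
            Submodule.projectionOnto_apply_of_mem_right hco v.2
          rw [a1, a2]
          exact (congrArg (fun y => y + f.2.1 v) (map_zero f.1.1)).trans (zero_add _) }
  rw [E.finrank_eq]
  exact Module.finrank_prod

theorem exists_m_of_subsingleton {r : ℕ} (reps : Fin r → TwRep G lam)
    (M : TwRep G lam) (hss : Subsingleton M.V) :
    ∃ m : Fin r → ℕ,
      (∀ k : G, trace ℂ M.V (M.φ k).toLinearMap
          = ∑ i, (m i : ℂ) * trace ℂ (reps i).V ((reps i).φ k).toLinearMap) ∧
      ∀ i, finrank ℂ (HomT M (reps i)) = m i := by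
  refine ⟨fun _ => 0, ?_, ?_⟩
  · intro k
    have h0 : (M.φ k).toLinearMap = 0 := Subsingleton.elim _ _
    rw [h0, map_zero]
    simp
  · intro i
    show finrank ℂ (HomT M (reps i)) = 0
    have h1 : finrank ℂ (M.V →ₗ[ℂ] (reps i).V) = 0 := by
      rw [Module.finrank_linearMap]
      have h2 : finrank ℂ M.V = 0 := Module.finrank_zero_of_subsingleton
      rw [h2, zero_mul]
    have h3 := Submodule.finrank_le (HomT M (reps i))
    omega

theorem main_decomp [Fintype G] (hll : lam 1 1 = 1)
    (hc : ∀ a b c : G, lam b c * lam a (b * c) = lam (a * b) c * lam a b)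
    {r : ℕ} (reps : Fin r → TwRep G lam) (hirr : ∀ i, (reps i).Irred)
    (hdist : ∀ i j, i ≠ j → ¬ (reps i).Iso (reps j))
    (hcompl : ∀ ρ : TwRep G lam, ρ.Irred → ∃ i, ρ.Iso (reps i)) :
    ∀ (n : ℕ) (M : TwRep G lam), finrank ℂ M.V ≤ n → ∃ m : Fin r → ℕ,
      (∀ k : G, trace ℂ M.V (M.φ k).toLinearMap
          = ∑ i, (m i : ℂ) * trace ℂ (reps i).V ((reps i).φ k).toLinearMap) ∧
      ∀ i, finrank ℂ (HomT M (reps i)) = m i := by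
  intro n
  induction n with
  | zero =>
    intro M hM
    have hss : Subsingleton M.V := Module.finrank_zero_iff.mp (Nat.le_zero.mp hM)
    exact exists_m_of_subsingleton reps M hss
  | succ n ih =>
    intro M hM
    rcases subsingleton_or_nontrivial M.V with hss | hnt
    · exact exists_m_of_subsingleton reps M hss
    · -- find a minimal nonzero invariant subspace
      have hex : ∃ d : ℕ, ∃ W : Submodule ℂ M.V, Inv M W ∧ W ≠ ⊥ ∧ finrank ℂ W = d := by
        refine ⟨finrank ℂ (⊤ : Submodule ℂ M.V), ⊤, fun g w _ => Submodule.mem_top, ?_, rfl⟩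
        intro h
        obtain ⟨v, hv⟩ := exists_ne (0 : M.V)
        have : v ∈ (⊥ : Submodule ℂ M.V) := h ▸ Submodule.mem_top
        exact hv (Submodule.mem_bot ℂ |>.mp this)
      obtain ⟨W, hWinv, hWne, hWrank⟩ := Nat.find_spec hex
      have hmin : ∀ d < Nat.find hex,
          ¬ ∃ W : Submodule ℂ M.V, Inv M W ∧ W ≠ ⊥ ∧ finrank ℂ W = d :=
        fun d hd => Nat.find_min hex hd
      -- the subrepresentation on W is irreducible
      have hirrW : (subrep hll M W hWinv).Irred := by
        constructor
        · obtain ⟨x, hxW, hx0⟩ := (Submodule.ne_bot_iff W).mp hWne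
          exact ⟨⟨x, hxW⟩, fun h => hx0 (congrArg Subtype.val h)⟩
        · intro U hU
          by_cases hUb : U = ⊥
          · exact Or.inl hUb
          · right
            have hU' : Inv M (U.map W.subtype) := by
              rintro g x ⟨u, hu, rfl⟩
              exact ⟨(subrep hll M W hWinv).φ g u, hU g u hu, rfl⟩
            have hne' : U.map W.subtype ≠ ⊥ := by
              intro h
              apply hUb
              rw [Submodule.eq_bot_iff] at h ⊢
              intro u hu
              have := h (W.subtype u) ⟨u, hu, rfl⟩
              exact Subtype.ext this
            have h1 : finrank ℂ (U.map W.subtype) = finrank ℂ U :=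
              Submodule.finrank_map_subtype_eq W U
            have h2 : ¬ finrank ℂ (U.map W.subtype) < Nat.find hex :=
              fun h => hmin _ h ⟨_, hU', hne', rfl⟩
            have h3 : finrank ℂ U ≤ finrank ℂ W := Submodule.finrank_le U
            have h4 : finrank ℂ U = finrank ℂ W := by omega
            exact Submodule.eq_top_of_finrank_eq h4
      obtain ⟨i₀, e, he⟩ := hcompl (subrep hll M W hWinv) hirrW
      obtain ⟨W', hW'inv, hco⟩ := maschke hll M W hWinv
      have hadd : finrank ℂ W + finrank ℂ W' = finrank ℂ M.V :=
        Submodule.finrank_add_eq_of_isCompl hco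
      have hWpos : 0 < finrank ℂ W := by
        rcases Nat.eq_zero_or_pos (finrank ℂ W) with h | h
        · exfalso
          exact hWne (Submodule.finrank_eq_zero.mp h)
        · exact h
      have hrank' : finrank ℂ (subrep hll M W' hW'inv).V ≤ n := by
        show finrank ℂ W' ≤ n
        omega
      obtain ⟨m', hm'tr, hm'hom⟩ := ih (subrep hll M W' hW'inv) hrank'
      refine ⟨fun i => m' i + (if i = i₀ then 1 else 0), ?_, ?_⟩
      · intro k
        have hm'tr2 : trace ℂ W' ((subrep hll M W' hW'inv).φ k).toLinearMap
            = ∑ i, (m' i : ℂ) * trace ℂ (reps i).V ((reps i).φ k).toLinearMap := hm'tr k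
        have htrW : trace ℂ W ((subrep hll M W hWinv).φ k).toLinearMap
            = trace ℂ (reps i₀).V ((reps i₀).φ k).toLinearMap := trace_congr e he k
        rw [trace_isCompl hll M k W W' hWinv hW'inv hco, hm'tr2, htrW]
        rw [Finset.sum_congr rfl (fun i _ => by
          push_cast [add_mul]
          rfl : ∀ i ∈ Finset.univ, ((m' i + (if i = i₀ then 1 else 0) : ℕ) : ℂ)
              * trace ℂ (reps i).V ((reps i).φ k).toLinearMap
            = (m' i : ℂ) * trace ℂ (reps i).V ((reps i).φ k).toLinearMap
              + (if i = i₀ then (1:ℂ) else 0) * trace ℂ (reps i).V ((reps i).φ k).toLinearMap)]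
        rw [Finset.sum_add_distrib]
        have hsing : ∑ i, (if i = i₀ then (1:ℂ) else 0)
            * trace ℂ (reps i).V ((reps i).φ k).toLinearMap
            = trace ℂ (reps i₀).V ((reps i₀).φ k).toLinearMap := by
          rw [Finset.sum_congr rfl (fun i _ => ite_mul _ _ _ _)]
          simp
        rw [hsing]
        ring
      · intro i
        rw [finrank_homT_isCompl hll M (reps i) W W' hWinv hW'inv hco, hm'hom i]
        have hW_hom : finrank ℂ (HomT (subrep hll M W hWinv) (reps i))
            = if i = i₀ then 1 else 0 := by
          rw [finrank_homT_congr e he]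
          by_cases hii : i = i₀
          · subst hii
            rw [if_pos rfl]
            exact finrank_homT_self (hirr i)
          · rw [if_neg hii]
            exact finrank_homT_ne (hirr i₀) (hirr i)
              (hdist i₀ i (fun h => hii (h.symm)))
        rw [hW_hom]
        by_cases hii : i = i₀ <;> simp [hii] <;> omega

section Regular

variable (lam) [Fintype G]

/-- A basis of `Fin (card G) → ℂ` indexed by `G`. -/
noncomputable def regB : Basis G ℂ (Fin (Fintype.card G) → ℂ) :=
  (Pi.basisFun ℂ (Fin (Fintype.card G))).reindex (Fintype.equivFin G).symm

/-- The twisted left regular action. -/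
noncomputable def regF (g : G) :
    (Fin (Fintype.card G) → ℂ) →ₗ[ℂ] (Fin (Fintype.card G) → ℂ) :=
  (regB (G := G)).constr ℂ fun h => ((lam g h : ℂˣ) : ℂ) • (regB (G := G)) (g * h)

theorem regF_basis (g h : G) :
    regF lam g ((regB (G := G)) h) = ((lam g h : ℂˣ) : ℂ) • (regB (G := G)) (g * h) := by
  simp [regF, Basis.constr_basis]

theorem regF_comp
    (hc : ∀ a b c : G, lam b c * lam a (b * c) = lam (a * b) c * lam a b) (g h : G) :
    (regF lam g).comp (regF lam h) = ((lam g h : ℂˣ) : ℂ) • regF lam (g * h) := by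
  apply (regB (G := G)).ext
  intro k
  simp only [LinearMap.comp_apply, LinearMap.smul_apply, regF_basis, map_smul]
  rw [← mul_assoc g h k, smul_smul, smul_smul]
  congr 1
  have hcc : ((lam h k : ℂˣ) : ℂ) * ((lam g (h * k) : ℂˣ) : ℂ)
      = ((lam (g * h) k : ℂˣ) : ℂ) * ((lam g h : ℂˣ) : ℂ) := by
    exact_mod_cast congrArg Units.val (hc g h k)
  rw [hcc]
  ring

theorem regF_one (hll : lam 1 1 = 1)
    (hc : ∀ a b c : G, lam b c * lam a (b * c) = lam (a * b) c * lam a b) :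
    regF lam 1 = LinearMap.id := by
  apply (regB (G := G)).ext
  intro k
  rw [regF_basis, lam_one_left hll hc, one_mul]
  simp

/-- The twisted regular representation, on a `Type 0` carrier. -/
noncomputable def Reg (hll : lam 1 1 = 1)
    (hc : ∀ a b c : G, lam b c * lam a (b * c) = lam (a * b) c * lam a b) :
    TwRep G lam where
  V := Fin (Fintype.card G) → ℂ
  φ g := LinearEquiv.ofLinear (regF lam g)
    (((lam g g⁻¹ : ℂˣ) : ℂ)⁻¹ • regF lam g⁻¹)
    (by
      rw [LinearMap.comp_smul, regF_comp lam hc, mul_inv_cancel, regF_one lam hll hc,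
        smul_smul, inv_mul_cancel₀ (Units.ne_zero _), one_smul])
    (by
      rw [LinearMap.smul_comp, regF_comp lam hc, inv_mul_cancel, regF_one lam hll hc,
        smul_smul, lam_inv_comm hll hc, inv_mul_cancel₀ (Units.ne_zero _), one_smul])
  hrep g h := by
    show (regF lam g).comp (regF lam h) = ((lam g h : ℂˣ) : ℂ) • regF lam (g * h)
    exact regF_comp lam hc g h

theorem trace_reg (hll : lam 1 1 = 1)
    (hc : ∀ a b c : G, lam b c * lam a (b * c) = lam (a * b) c * lam a b) (k : G) :
    trace ℂ (Reg lam hll hc).V ((Reg lam hll hc).φ k).toLinearMap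
      = if k = 1 then (Fintype.card G : ℂ) else 0 := by
  show trace ℂ (Fin (Fintype.card G) → ℂ) (regF lam k)
      = if k = 1 then (Fintype.card G : ℂ) else 0
  rw [LinearMap.trace_eq_matrix_trace ℂ (regB (G := G)), Matrix.trace]
  have hdiag : ∀ h : G, (LinearMap.toMatrix (regB (G := G)) (regB (G := G)) (regF lam k)) h h
      = ((lam k h : ℂˣ) : ℂ) * (if k * h = h then 1 else 0) := by
    intro h
    rw [LinearMap.toMatrix_apply, regF_basis]
    simp only [map_smul, Basis.repr_self, Finsupp.smul_apply, Finsupp.single_apply]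
    simp [smul_eq_mul]
  rw [Finset.sum_congr rfl fun h _ => by
    rw [Matrix.diag_apply, hdiag h]]
  by_cases hk : k = 1
  · subst hk
    simp [lam_one_left hll hc]
  · have : ∀ h : G, ¬ (k * h = h) := by
      intro h hkh
      exact hk (by
        have := mul_right_cancel (a := k) (b := h) (by rw [hkh, one_mul] : k * h = 1 * h)
        exact this)
    rw [if_neg hk]
    rw [Finset.sum_congr rfl fun h _ => by rw [if_neg (this h), mul_zero]]
    simp

theorem finrank_homT_reg (hll : lam 1 1 = 1)
    (hc : ∀ a b c : G, lam b c * lam a (b * c) = lam (a * b) c * lam a b)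
    (ρ : TwRep G lam) :
    finrank ℂ (HomT (Reg lam hll hc) ρ) = finrank ℂ ρ.V := by
  have hRapp : ∀ (g h : G), (Reg lam hll hc).φ g ((regB (G := G)) h)
      = ((lam g h : ℂˣ) : ℂ) • (regB (G := G)) (g * h) := fun g h => regF_basis lam g h
  have hB : ∀ g : G, (Reg lam hll hc).φ g ((regB (G := G)) 1) = (regB (G := G)) g := by
    intro g
    rw [hRapp, lam_one_right hll hc, mul_one]
    simp
    rfl
  let ev : HomT (Reg lam hll hc) ρ →ₗ[ℂ] ρ.V :=
    { toFun := fun f => (f : (Reg lam hll hc).V →ₗ[ℂ] ρ.V) ((regB (G := G)) 1)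
      map_add' := fun a b => rfl
      map_smul' := fun c a => rfl }
  have hbij : Function.Bijective ev := by
    constructor
    · intro a b hab
      apply Subtype.ext
      apply (regB (G := G)).ext
      intro g
      have h1 : (a : (Reg lam hll hc).V →ₗ[ℂ] ρ.V) ((regB (G := G)) g)
          = ρ.φ g ((a : (Reg lam hll hc).V →ₗ[ℂ] ρ.V) ((regB (G := G)) 1)) := by
        have := a.2 g ((regB (G := G)) 1)
        rw [hB g] at this
        exact this
      have h2 : (b : (Reg lam hll hc).V →ₗ[ℂ] ρ.V) ((regB (G := G)) g)
          = ρ.φ g ((b : (Reg lam hll hc).V →ₗ[ℂ] ρ.V) ((regB (G := G)) 1)) := by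
        have := b.2 g ((regB (G := G)) 1)
        rw [hB g] at this
        exact this
      exact h1.trans ((congrArg (ρ.φ g) hab).trans h2.symm)
    · intro v
      set F : (Fin (Fintype.card G) → ℂ) →ₗ[ℂ] ρ.V :=
        (regB (G := G)).constr ℂ fun g => ρ.φ g v with hF
      have hFb : ∀ g : G, F ((regB (G := G)) g) = ρ.φ g v := by
        intro g
        simp [hF, Basis.constr_basis]
      have hFmem : F ∈ HomT (Reg lam hll hc) ρ := by
        intro g w
        have hext : F.comp ((Reg lam hll hc).φ g).toLinearMap
            = (ρ.φ g).toLinearMap.comp F := by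
          apply (regB (G := G)).ext
          intro h
          show F ((Reg lam hll hc).φ g ((regB (G := G)) h)) = ρ.φ g (F ((regB (G := G)) h))
          calc F ((Reg lam hll hc).φ g ((regB (G := G)) h))
              = F (((lam g h : ℂˣ) : ℂ) • (regB (G := G)) (g * h)) := congrArg F (hRapp g h)
            _ = ((lam g h : ℂˣ) : ℂ) • F ((regB (G := G)) (g * h)) := map_smul F _ _
            _ = ((lam g h : ℂˣ) : ℂ) • ρ.φ (g * h) v := by rw [hFb]
            _ = ρ.φ g (ρ.φ h v) := (phi_comp ρ g h v).symm
            _ = ρ.φ g (F ((regB (G := G)) h)) := by rw [hFb]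
        exact LinearMap.ext_iff.mp hext w
      refine ⟨⟨F, hFmem⟩, ?_⟩
      show F ((regB (G := G)) 1) = v
      rw [hFb, phi_one hll]
  exact (LinearEquiv.ofBijective ev hbij).finrank_eq

theorem key (hll : lam 1 1 = 1)
    (hc : ∀ a b c : G, lam b c * lam a (b * c) = lam (a * b) c * lam a b)
    {r : ℕ} (reps : Fin r → TwRep G lam) (hirr : ∀ i, (reps i).Irred)
    (hdist : ∀ i j, i ≠ j → ¬ (reps i).Iso (reps j))
    (hcompl : ∀ ρ : TwRep G lam, ρ.Irred → ∃ i, ρ.Iso (reps i)) (k : G) :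
    ∑ i, (finrank ℂ (reps i).V : ℂ) * trace ℂ (reps i).V ((reps i).φ k).toLinearMap
      = if k = 1 then (Fintype.card G : ℂ) else 0 := by
  obtain ⟨m, hmtr, hmhom⟩ := main_decomp hll hc reps hirr hdist hcompl
    (finrank ℂ (Reg lam hll hc).V) (Reg lam hll hc) le_rfl
  have hm : ∀ i, m i = finrank ℂ (reps i).V := by
    intro i
    rw [← hmhom i, finrank_homT_reg]
  rw [← trace_reg lam hll hc k, hmtr k]
  exact Finset.sum_congr rfl fun i _ => by rw [hm i]

end Regular

end TwAux

/-- The identity of Section 4.5 of the paper, obtained by computing the twisted unoriented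
Dijkgraaf–Witten partition function of `ℝP²` in two ways: for a finite ℤ₂-graded group
`π : Ĝ → {±1}` with kernel `G` and a normalized `π`-twisted 2-cocycle `λ̂`, the signed
count `Σ_{ς odd, ς² = e} λ̂(ς,ς)` equals `Σ_i ν(V_i)·dim V_i`, the sum over a complete
set of irreducible `λ`-twisted representations of `G` of the `(Ĝ,λ̂)`-twisted
Frobenius–Schur indicator `ν(V_i) = (1/|G|) Σ_{ς odd} λ̂(ς,ς)·tr φ_i(ς²)` times the
dimension. -/
theorem projective_plane_partition_function
    {Ghat : Type*} [Group Ghat] [Fintype Ghat]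
    (π : Ghat →* ℤˣ) (hπ : Function.Surjective π)
    (lam : Ghat → Ghat → ℂˣ) (hnorm : lam 1 1 = 1)
    (hcoc : ∀ ω₁ ω₂ ω₃ : Ghat,
      lam ω₂ ω₃ ^ ((π ω₁ : ℤˣ) : ℤ) * lam ω₁ (ω₂ * ω₃) = lam (ω₁ * ω₂) ω₃ * lam ω₁ ω₂)
    (r : ℕ) (reps : Fin r → TwRep π.ker (fun g h => lam (g : Ghat) (h : Ghat)))
    (hirr : ∀ i, (reps i).Irred)
    (hdist : ∀ i j, i ≠ j → ¬ (reps i).Iso (reps j))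
    (hcompl : ∀ ρ : TwRep π.ker (fun g h => lam (g : Ghat) (h : Ghat)),
      ρ.Irred → ∃ i, ρ.Iso (reps i)) :
    ∑ ς ∈ Finset.univ.filter (fun ς : Ghat => π ς = -1 ∧ ς * ς = 1),
        ((lam ς ς : ℂˣ) : ℂ)
      = ∑ i : Fin r,
          ((Nat.card π.ker : ℂ)⁻¹ *
              ∑ ς ∈ Finset.univ.filter (fun ς : Ghat => π ς = -1),
                ((lam ς ς : ℂˣ) : ℂ) *
                  LinearMap.trace ℂ (reps i).V ((reps i).φ (sqk π ς)).toLinearMap) *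
            (Module.finrank ℂ (reps i).V : ℂ) := by
  classical
  haveI : Fintype π.ker := Fintype.ofFinite _
  have hll : (fun (g h : π.ker) => lam (g : Ghat) (h : Ghat)) 1 1 = 1 := by
    show lam ((1 : π.ker) : Ghat) ((1 : π.ker) : Ghat) = 1
    rw [OneMemClass.coe_one]
    exact hnorm
  have hc : ∀ a b c : π.ker,
      (fun (g h : π.ker) => lam (g : Ghat) (h : Ghat)) b c
          * (fun (g h : π.ker) => lam (g : Ghat) (h : Ghat)) a (b * c)
        = (fun (g h : π.ker) => lam (g : Ghat) (h : Ghat)) (a * b) c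
          * (fun (g h : π.ker) => lam (g : Ghat) (h : Ghat)) a b := by
    intro a b c
    have h := hcoc (a : Ghat) (b : Ghat) (c : Ghat)
    have ha : π (a : Ghat) = 1 := a.2
    rw [ha] at h
    simp only [Units.val_one, zpow_one] at h
    show lam (b : Ghat) (c : Ghat) * lam (a : Ghat) (((b * c : π.ker) : Ghat))
        = lam (((a * b : π.ker) : Ghat)) (c : Ghat) * lam (a : Ghat) (b : Ghat)
    rw [Subgroup.coe_mul, Subgroup.coe_mul]
    exact h
  have hkey := TwAux.key (fun (g h : π.ker) => lam (g : Ghat) (h : Ghat))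
    hll hc reps hirr hdist hcompl
  have hcard : (Fintype.card π.ker : ℂ) = (Nat.card π.ker : ℂ) := by
    rw [Nat.card_eq_fintype_card]
  set n : ℂ := (Nat.card π.ker : ℂ) with hn'
  have hn : n ≠ 0 := by
    rw [hn']
    exact Nat.cast_ne_zero.mpr (Nat.card_pos (α := π.ker)).ne'
  have hsqk : ∀ ς : Ghat, (sqk π ς = 1) ↔ (ς * ς = 1) := by
    intro ς
    constructor
    · intro h
      have := congrArg (Subtype.val) h
      simpa [sqk] using this
    · intro h
      apply Subtype.ext
      simpa [sqk] using h
  have step1 : ∀ i : Fin r,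
      (n⁻¹ * ∑ ς ∈ Finset.univ.filter (fun ς : Ghat => π ς = -1),
          ((lam ς ς : ℂˣ) : ℂ) *
            LinearMap.trace ℂ (reps i).V ((reps i).φ (sqk π ς)).toLinearMap)
        * (Module.finrank ℂ (reps i).V : ℂ)
      = n⁻¹ * ∑ ς ∈ Finset.univ.filter (fun ς : Ghat => π ς = -1),
          ((lam ς ς : ℂˣ) : ℂ) * ((Module.finrank ℂ (reps i).V : ℂ) *
            LinearMap.trace ℂ (reps i).V ((reps i).φ (sqk π ς)).toLinearMap) := by
    intro i
    rw [mul_assoc, Finset.sum_mul]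
    congr 1
    exact Finset.sum_congr rfl fun ς _ => by ring
  rw [Finset.sum_congr rfl fun i _ => step1 i, ← Finset.mul_sum, Finset.sum_comm]
  have step2 : ∀ ς ∈ Finset.univ.filter (fun ς : Ghat => π ς = -1),
      (∑ i : Fin r, ((lam ς ς : ℂˣ) : ℂ) * ((Module.finrank ℂ (reps i).V : ℂ) *
          LinearMap.trace ℂ (reps i).V ((reps i).φ (sqk π ς)).toLinearMap))
        = ((lam ς ς : ℂˣ) : ℂ) * (if ς * ς = 1 then n else 0) := by
    intro ς _
    rw [← Finset.mul_sum]
    congr 1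
    rw [hkey (sqk π ς), hcard]
    by_cases h : ς * ς = 1
    · rw [if_pos ((hsqk ς).mpr h), if_pos h]
    · rw [if_neg (fun hh => h ((hsqk ς).mp hh)), if_neg h]
  rw [Finset.sum_congr rfl step2]
  have step3 : ∀ ς ∈ Finset.univ.filter (fun ς : Ghat => π ς = -1),
      ((lam ς ς : ℂˣ) : ℂ) * (if ς * ς = 1 then n else 0)
        = n * (if ς * ς = 1 then ((lam ς ς : ℂˣ) : ℂ) else 0) := by
    intro ς _
    by_cases h : ς * ς = 1 <;> simp [h] <;> ring
  rw [Finset.sum_congr rfl step3, ← Finset.mul_sum, ← mul_assoc,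
    inv_mul_cancel₀ hn, one_mul]
  have hfilter : Finset.univ.filter (fun ς : Ghat => π ς = -1 ∧ ς * ς = 1)
      = (Finset.univ.filter (fun ς : Ghat => π ς = -1)).filter (fun ς => ς * ς = 1) := by
    rw [Finset.filter_filter]
  rw [hfilter, Finset.sum_filter]
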